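/- Let A be an n×n complex matrix of index k and let m ≥ 1 be an integer with k < 2m. Then A^{#_m} A^m = A^d A^m, where A^d is the Drazin inverse of A. -/
import Mathlib

open Matrix

/-- `X` is the Moore–Penrose inverse of `A` (four Penrose equations). -/
def MoorePenroseOf {n : ℕ} (A X : Matrix (Fin n) (Fin n) ℂ) : Prop :=
  A * X * A = A ∧ X * A * X = X ∧ (A * X)ᴴ = A * X ∧ (X * A)ᴴ = X * A

/-- Column space of a square complex matrix. -/
noncomputable def colSpace {n : ℕ} (A : Matrix (Fin n) (Fin n) ℂ) : Submodule ℂ (Fin n → ℂ) :=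
  LinearMap.range A.mulVecLin

/-- Null space of a square complex matrix. -/
noncomputable def nullSpace {n : ℕ} (A : Matrix (Fin n) (Fin n) ℂ) : Submodule ℂ (Fin n → ℂ) :=
  LinearMap.ker A.mulVecLin

/-- `k` is the index of `A`: the smallest nonnegative integer with
`rank(A^k) = rank(A^(k+1))`. -/
def HasIndex {n : ℕ} (A : Matrix (Fin n) (Fin n) ℂ) (k : ℕ) : Prop :=
  (A ^ k).rank = (A ^ (k + 1)).rank ∧ ∀ j < k, (A ^ j).rank ≠ (A ^ (j + 1)).rank

/-- `X` is the core-EP inverse of `A` (where `k = Ind(A)`): `XAX = X` and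
`R(X) = R(Xᴴ) = R(A^k)`. -/
def IsCoreEP {n : ℕ} (A X : Matrix (Fin n) (Fin n) ℂ) (k : ℕ) : Prop :=
  X * A * X = X ∧ colSpace X = colSpace (A ^ k) ∧ colSpace Xᴴ = colSpace (A ^ k)

/-- If `colSpace B ≤ colSpace C` then `B` factors as `C * W`. -/
lemma exists_fac' {n : ℕ} {B C : Matrix (Fin n) (Fin n) ℂ} (h : colSpace B ≤ colSpace C) :
    ∃ W, B = C * W := by
  have hcol : ∀ j, B.mulVec (Pi.single j 1) ∈ colSpace C := fun j => h ⟨_, rfl⟩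
  choose w hw using hcol
  refine ⟨Matrix.of fun i j => w j i, ?_⟩
  ext i j
  have := congrFun (hw j) i
  simp only [mulVecLin_apply, mulVec_single, mul_one] at this
  rw [Matrix.mul_apply]
  simpa [mulVec, dotProduct, Matrix.mul_apply] using this.symm

lemma colSpace_mul_le' {n : ℕ} (B C : Matrix (Fin n) (Fin n) ℂ) :
    colSpace (B * C) ≤ colSpace B := by
  rw [colSpace, colSpace, Matrix.mulVecLin_mul]
  exact LinearMap.range_comp_le_range _ _

/-- if `k < 2m` then `A^{#_m} A^m = A^d A^m`. -/
theorem stmt_16 {n k m : ℕ} (hm : 1 ≤ m) (hkm : k < 2 * m)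
    (A CEP AmDag D : Matrix (Fin n) (Fin n) ℂ)
    (hInd : HasIndex A k)
    (hCEP : IsCoreEP A CEP k)
    (hMP : MoorePenroseOf (A ^ m) AmDag)
    (hD1 : D * A * D = D)
    (hD2 : A * D = D * A)
    (hD3 : D * A ^ (k + 1) = A ^ k) :
    CEP ^ (m + 1) * A ^ m * (A ^ m * AmDag) * A ^ m = D * A ^ m := by
  obtain ⟨hX, hcolX, -⟩ := hCEP
  set X := CEP with hXdef
  -- A^k = X * V
  obtain ⟨V, hV⟩ := exists_fac' (le_of_eq hcolX.symm)
  -- colSpace (A^(k+1)) = colSpace (A^k), hence A^k = A^(k+1) * W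
  have hle : colSpace (A ^ (k + 1)) ≤ colSpace (A ^ k) := by
    have := colSpace_mul_le' (A ^ k) A
    rwa [← pow_succ] at this
  have hfr : Module.finrank ℂ (colSpace (A ^ k)) = Module.finrank ℂ (colSpace (A ^ (k + 1))) :=
    hInd.1
  have heq : colSpace (A ^ (k + 1)) = colSpace (A ^ k) :=
    Submodule.eq_of_le_of_finrank_le hle (le_of_eq hfr)
  obtain ⟨W, hW⟩ := exists_fac' (le_of_eq heq.symm)
  -- base identity: X * A^(k+1) = A^k
  have hbase : X * A ^ (k + 1) = A ^ k := by
    rw [pow_succ', hV, ← mul_assoc, ← mul_assoc, hX]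
  have hstep : ∀ j, k ≤ j → X * A ^ (j + 1) = A ^ j := by
    intro j hj
    obtain ⟨t, rfl⟩ := Nat.exists_eq_add_of_le hj
    rw [show k + t + 1 = (k + 1) + t by omega, pow_add, ← mul_assoc, hbase, ← pow_add]
  have hpow : ∀ t j, k ≤ j → X ^ t * A ^ (j + t) = A ^ j := by
    intro t
    induction t with
    | zero => intro j _; simp
    | succ t ih =>
      intro j hj
      have h1 : X ^ (t + 1) * A ^ (j + (t + 1)) = X ^ t * (X * A ^ ((j + t) + 1)) := by
        rw [pow_succ, mul_assoc, show j + (t + 1) = (j + t) + 1 by omega]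
      rw [h1, hstep (j + t) (by omega), ih j hj]
  -- Drazin step
  have hDstep : ∀ j, k ≤ j → D * A ^ (j + 1) = A ^ j := by
    intro j hj
    obtain ⟨t, rfl⟩ := Nat.exists_eq_add_of_le hj
    rw [show k + t + 1 = (k + 1) + t by omega, pow_add, ← mul_assoc, hD3, ← pow_add]
  have hcomm : ∀ s : ℕ, D * A ^ s = A ^ s * D := by
    intro s
    exact ((Commute.pow_right (show Commute D A from hD2.symm) s)).eq
  have hDD : ∀ s : ℕ, D ^ (s + 1) * A ^ s = D := by
    intro s
    induction s with
    | zero => simp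
    | succ s ih =>
      have h2 : D ^ (s + 2) * A ^ (s + 1) = (D ^ (s + 1) * A ^ s) * (D * A) := by
        rw [pow_succ D, pow_succ A, mul_assoc, ← mul_assoc D (A ^ s) A, hcomm s,
          mul_assoc (A ^ s) D A, ← mul_assoc]
      rw [show s + 1 + 1 = s + 2 by omega] at *
      rw [h2, ih, ← hD2, ← mul_assoc]
      exact hD1
  -- X * A^k = A^k * W and D * A^k = A^k * W
  have hXk2 : X * A ^ k = A ^ k * W := by
    conv_lhs => rw [hW]
    rw [← mul_assoc, hbase]
  have hDk2 : D * A ^ k = A ^ k * W := by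
    conv_lhs => rw [hW]
    rw [← mul_assoc, hD3]
  have hXDk : ∀ r : ℕ, X ^ r * A ^ k = D ^ r * A ^ k := by
    intro r
    induction r with
    | zero => simp
    | succ r ih =>
      calc X ^ (r + 1) * A ^ k = X ^ r * (X * A ^ k) := by rw [pow_succ, mul_assoc]
        _ = X ^ r * A ^ k * W := by rw [hXk2, mul_assoc]
        _ = D ^ r * A ^ k * W := by rw [ih]
        _ = D ^ r * (D * A ^ k) := by rw [mul_assoc, hDk2]
        _ = D ^ (r + 1) * A ^ k := by rw [pow_succ, mul_assoc]
  -- simplify the LHS using the first Penrose equation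
  have hP : A ^ m * (AmDag * A ^ m) = A ^ m := by rw [← mul_assoc]; exact hMP.1
  have hL : X ^ (m + 1) * A ^ m * (A ^ m * AmDag) * A ^ m = X ^ (m + 1) * A ^ (m + m) := by
    simp only [mul_assoc]
    rw [hP, ← pow_add]
  rw [hL]
  rcases le_or_gt (k + 1) m with hc | hc
  · -- small index case: both sides equal A^(m-1)
    have e1 : X ^ (m + 1) * A ^ (m + m) = A ^ (m - 1) := by
      have := hpow (m + 1) (m - 1) (by omega)
      rwa [show (m - 1) + (m + 1) = m + m by omega] at this
    have e2 : D * A ^ m = A ^ (m - 1) := by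
      have := hDstep (m - 1) (by omega)
      rwa [show (m - 1) + 1 = m by omega] at this
    rw [e1, e2]
  · -- large index case: m ≤ k < 2m
    have hmk : m ≤ k := by omega
    set r := k - m with hr
    have hrm : r + 1 ≤ m := by omega
    have hsplit : X ^ (m + 1) = X ^ (r + 1) * X ^ (m - r) := by
      rw [← pow_add]; congr 1; omega
    have h2 : X ^ (m - r) * A ^ (k + (m - r)) = A ^ k := hpow (m - r) k le_rfl
    calc X ^ (m + 1) * A ^ (m + m)
        = X ^ (r + 1) * (X ^ (m - r) * A ^ (k + (m - r))) := by
          rw [hsplit, mul_assoc, show m + m = k + (m - r) by omega]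
      _ = X ^ (r + 1) * A ^ k := by rw [h2]
      _ = D ^ (r + 1) * A ^ k := hXDk (r + 1)
      _ = D ^ (r + 1) * A ^ r * A ^ m := by rw [mul_assoc, ← pow_add, show r + m = k by omega]
      _ = D * A ^ m := by rw [hDD r]
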